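/- There exists a finite set B ⊂ ℝ such that for every c ∈ ℝ \ B and every formal power series η ∈ ℝ[[t]] with order(η) > p, the power series Σ_{i=0}^d c_i·(c·t^p + η)^i has t-adic order equal to min_{0 ≤ i ≤ d} (i·p + b_i); in particular, this order is at most b_0. -/

import Mathlib

open PowerSeries

/-- Newton polygon computation of the order of `f` along a generic perturbation of an arc
(integer-exponent form of Lemma 2.2(i)): for generic `c`, the `t`-adic order of
`Σ cᵢ·(c·t^p + η)^i` equals `min_i (i·p + order cᵢ)`, and in particular is `≤ order c₀`. -/
theorem order_generic_perturbation
    (d : ℕ) (c : Fin (d + 1) → PowerSeries ℝ) (hc : ∃ i, c i ≠ 0)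
    (p : ℕ) (hp : 0 < p) :
    ∃ B : Finset ℝ, ∀ a : ℝ, a ∉ B → ∀ η : PowerSeries ℝ, (p : ℕ∞) < η.order →
      (∑ i : Fin (d + 1),
        c i * (PowerSeries.C a * PowerSeries.X ^ p + η) ^ (i : ℕ)).order =
        Finset.univ.inf (fun i : Fin (d + 1) => ((i : ℕ) * p : ℕ∞) + (c i).order) ∧
      (∑ i : Fin (d + 1),
        c i * (PowerSeries.C a * PowerSeries.X ^ p + η) ^ (i : ℕ)).order ≤
        (c 0).order := by
  classical
  set F : Fin (d + 1) → ℕ∞ := fun i => ((i : ℕ) * p : ℕ∞) + (c i).order with hF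
  have Fdef : ∀ i : Fin (d + 1), F i = (((i : ℕ) * p : ℕ) : ℕ∞) + (c i).order := by
    intro i
    rw [hF]
    push_cast
    ring
  obtain ⟨i0, hi0⟩ := hc
  -- the inf is finite
  have hFi0 : F i0 ≠ ⊤ := by
    rw [Fdef]
    intro h
    rcases WithTop.add_eq_top.mp h with h | h
    · exact ENat.coe_ne_top _ h
    · exact hi0 (PowerSeries.order_eq_top.mp h)
  have hInf_ne : Finset.univ.inf F ≠ ⊤ := by
    intro h
    exact hFi0 (top_le_iff.mp (h ▸ Finset.inf_le (Finset.mem_univ i0)))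
  obtain ⟨n, hn⟩ := WithTop.ne_top_iff_exists.mp hInf_ne
  replace hn : (n : ℕ∞) = Finset.univ.inf F := hn
  -- key facts about indices achieving the inf
  have key : ∀ i : Fin (d + 1), F i = (n : ℕ∞) →
      (i : ℕ) * p ≤ n ∧ (c i).order = ((n - (i : ℕ) * p : ℕ) : ℕ∞) := by
    intro i hi
    rw [Fdef] at hi
    have hne : (c i).order ≠ ⊤ := by
      intro h
      rw [h, add_top] at hi
      exact ENat.coe_ne_top n hi.symm
    obtain ⟨b, hb⟩ := WithTop.ne_top_iff_exists.mp hne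
    replace hb : (b : ℕ∞) = (c i).order := hb
    rw [← hb] at hi
    have hnat : (i : ℕ) * p + b = n := by
      rw [← Nat.cast_add] at hi
      exact_mod_cast hi
    refine ⟨by omega, ?_⟩
    rw [← hb]
    congr 1
    omega
  set S : Finset (Fin (d + 1)) := Finset.univ.filter (fun i => F i = (n : ℕ∞)) with hS
  set P : Polynomial ℝ := ∑ i ∈ S,
      Polynomial.C ((PowerSeries.coeff (n - (i : ℕ) * p)) (c i)) * Polynomial.X ^ (i : ℕ)
    with hP
  -- P is nonzero
  have hPne : P ≠ 0 := by
    obtain ⟨i1, -, hi1⟩ := Finset.exists_mem_eq_inf (Finset.univ : Finset (Fin (d + 1)))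
      Finset.univ_nonempty F
    have hi1' : F i1 = (n : ℕ∞) := by rw [← hi1]; exact hn.symm
    have hi1S : i1 ∈ S := by simp [hS, hi1']
    obtain ⟨hle, hord⟩ := key i1 hi1'
    have hcoeff : (PowerSeries.coeff (n - (i1 : ℕ) * p)) (c i1) ≠ 0 := by
      have := (PowerSeries.order_eq_nat.mp hord).1
      exact this
    intro h0
    have : P.coeff (i1 : ℕ) = 0 := by rw [h0]; simp
    rw [hP, Polynomial.finset_sum_coeff] at this
    rw [Finset.sum_eq_single i1] at this
    · simp only [Polynomial.coeff_C_mul, Polynomial.coeff_X_pow, if_pos rfl, mul_one,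
        if_true] at this
      exact hcoeff this
    · intro j _ hji
      simp only [Polynomial.coeff_C_mul, Polynomial.coeff_X_pow]
      rw [if_neg, mul_zero]
      exact fun h => hji (Fin.val_injective h.symm)
    · intro h; exact absurd hi1S h
  refine ⟨P.roots.toFinset, fun a ha η hη => ?_⟩
  have hPa : P.eval a ≠ 0 := by
    intro h
    exact ha (Multiset.mem_toFinset.mpr (Polynomial.mem_roots'.mpr ⟨hPne, h⟩))
  set g : PowerSeries ℝ := PowerSeries.C a * PowerSeries.X ^ p + η with hg
  -- coefficients of g
  have hg_lt : ∀ l < p, PowerSeries.coeff l g = 0 := by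
    intro l hl
    rw [hg, map_add, PowerSeries.coeff_C_mul, PowerSeries.coeff_X_pow, if_neg hl.ne,
      mul_zero, zero_add]
    exact PowerSeries.coeff_of_lt_order l (lt_trans (by exact_mod_cast hl) hη)
  have hg_p : PowerSeries.coeff p g = a := by
    rw [hg, map_add, PowerSeries.coeff_C_mul, PowerSeries.coeff_X_pow, if_pos rfl, mul_one,
      PowerSeries.coeff_of_lt_order p hη, add_zero]
  -- coefficients of powers of g
  have hgpow : ∀ i : ℕ, (∀ l < i * p, PowerSeries.coeff l (g ^ i) = 0) ∧
      PowerSeries.coeff (i * p) (g ^ i) = a ^ i := by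
    intro i
    induction i with
    | zero => simp
    | succ i ih =>
      have hlow : ∀ l < (i + 1) * p, PowerSeries.coeff l (g ^ (i + 1)) = 0 := by
        intro l hl
        rw [pow_succ, PowerSeries.coeff_mul]
        apply Finset.sum_eq_zero
        rintro ⟨j, k⟩ hjk
        rw [Finset.HasAntidiagonal.mem_antidiagonal] at hjk
        have hmul : (i + 1) * p = i * p + p := by ring
        by_cases hj : j < i * p
        · rw [ih.1 j hj, zero_mul]
        · have hk : k < p := by omega
          rw [hg_lt k hk, mul_zero]
      refine ⟨hlow, ?_⟩
      rw [pow_succ, PowerSeries.coeff_mul]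
      rw [Finset.sum_eq_single_of_mem (i * p, p)
        (Finset.HasAntidiagonal.mem_antidiagonal.mpr (by ring))]
      · rw [ih.2, hg_p, pow_succ]
      · rintro ⟨j, k⟩ hjk hne
        rw [Finset.HasAntidiagonal.mem_antidiagonal] at hjk
        have hmul : (i + 1) * p = i * p + p := by ring
        by_cases hj : j < i * p
        · rw [ih.1 j hj, zero_mul]
        · have hk : k < p ∨ (j = i * p ∧ k = p) := by omega
          rcases hk with hk | ⟨rfl, rfl⟩
          · rw [hg_lt k hk, mul_zero]
          · exact absurd rfl hne
  -- vanishing of low coefficients of each summand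
  have claim1 : ∀ (i : Fin (d + 1)) (k : ℕ), (k : ℕ∞) < F i →
      PowerSeries.coeff k (c i * g ^ (i : ℕ)) = 0 := by
    intro i k hk
    rw [PowerSeries.coeff_mul]
    apply Finset.sum_eq_zero
    rintro ⟨j, l⟩ hjl
    rw [Finset.HasAntidiagonal.mem_antidiagonal] at hjl
    by_cases hl : l < (i : ℕ) * p
    · rw [(hgpow (i : ℕ)).1 l hl, mul_zero]
    · have hj : (j : ℕ∞) < (c i).order := by
        rw [Fdef] at hk
        have h1 : (((i : ℕ) * p : ℕ) : ℕ∞) + (j : ℕ∞) ≤ (k : ℕ∞) := by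
          have : (i : ℕ) * p + j ≤ k := by omega
          exact_mod_cast this
        have h2 : (((i : ℕ) * p : ℕ) : ℕ∞) + (j : ℕ∞) < (((i : ℕ) * p : ℕ) : ℕ∞) + (c i).order :=
          lt_of_le_of_lt h1 hk
        exact (WithTop.add_lt_add_iff_left (ENat.coe_ne_top _)).mp h2
      rw [PowerSeries.coeff_of_lt_order j hj, zero_mul]
  -- the n-th coefficient of each summand
  have claim2 : ∀ i : Fin (d + 1),
      PowerSeries.coeff n (c i * g ^ (i : ℕ)) =
        if F i = (n : ℕ∞) then
          (PowerSeries.coeff (n - (i : ℕ) * p)) (c i) * a ^ (i : ℕ) else 0 := by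
    intro i
    by_cases hi : F i = (n : ℕ∞)
    · rw [if_pos hi]
      obtain ⟨hle, hord⟩ := key i hi
      rw [PowerSeries.coeff_mul]
      rw [Finset.sum_eq_single_of_mem (n - (i : ℕ) * p, (i : ℕ) * p)
        (Finset.HasAntidiagonal.mem_antidiagonal.mpr (by omega))]
      · rw [(hgpow (i : ℕ)).2]
      · rintro ⟨j, l⟩ hjl hne
        rw [Finset.HasAntidiagonal.mem_antidiagonal] at hjl
        by_cases hl : l < (i : ℕ) * p
        · rw [(hgpow (i : ℕ)).1 l hl, mul_zero]
        · by_cases hl' : l = (i : ℕ) * p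
          · exact absurd (by simp [Prod.ext_iff, hl']; omega) hne
          · have hj : j < n - (i : ℕ) * p := by omega
            have : (j : ℕ∞) < (c i).order := by
              rw [hord]; exact_mod_cast hj
            rw [PowerSeries.coeff_of_lt_order j this, zero_mul]
    · rw [if_neg hi]
      apply claim1
      have hle : (n : ℕ∞) ≤ F i := by
        rw [hn]; exact Finset.inf_le (Finset.mem_univ i)
      exact lt_of_le_of_ne hle (Ne.symm hi)
  set f : PowerSeries ℝ := ∑ i : Fin (d + 1), c i * g ^ (i : ℕ) with hf
  have hfn : PowerSeries.coeff n f = P.eval a := by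
    rw [hf, map_sum]
    rw [Finset.sum_congr rfl (fun i _ => claim2 i)]
    rw [Finset.sum_ite, Finset.sum_const_zero, add_zero, hP]
    rw [Polynomial.eval_finset_sum]
    refine Finset.sum_congr rfl fun i _ => ?_
    simp
  have hford : f.order = (n : ℕ∞) := by
    rw [PowerSeries.order_eq_nat]
    constructor
    · rw [hfn]; exact hPa
    · intro k hk
      rw [hf, map_sum]
      apply Finset.sum_eq_zero
      intro i _
      apply claim1
      calc (k : ℕ∞) < (n : ℕ∞) := by exact_mod_cast hk
        _ ≤ F i := by rw [hn]; exact Finset.inf_le (Finset.mem_univ i)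
  have hmain : f.order = Finset.univ.inf F := by rw [hford, ← hn]
  refine ⟨hmain, ?_⟩
  rw [hmain]
  calc Finset.univ.inf F ≤ F 0 := Finset.inf_le (Finset.mem_univ 0)
    _ = (c 0).order := by simp [hF]
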